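/- Let Φ₁, …, Φ_d be mutually independent random measures on a measurable space X with σ-finite mean measures M₁, …, M_d, each Φᵢ admitting a Palm kernel {Pᵢ^x}_{x∈X}. Set Φ = Σᵢ₌₁^d Φᵢ and M = Σᵢ₌₁^d Mᵢ. Then the kernel P^x := Σᵢ₌₁^d (dMᵢ/dM)(x) · (Pᵢ^x ⊕ law(Σ_{q≠i} Φ_q)) is a Palm kernel for Φ, i.e., for every measurable B ⊆ X and every measurable set L of measures on X, E[Φ(B) 1(Φ ∈ L)] = ∫_B P^x(L) M(dx). (Equivalently: the Palm version of Σᵢ Φᵢ at x equals in distribution Φᵢₓ + Σ_{q≠i} Φ_q with probability proportional to Mᵢ(dx), for i = 1, …, d.) -/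

import Mathlib

open MeasureTheory
open scoped ENNReal

/-- The law of the sum of two independent random measures with laws `Q₁` and `Q₂`:
the pushforward of the product measure under the addition map `(μ, φ) ↦ μ + φ`. -/
noncomputable def sumLaw {X : Type*} [MeasurableSpace X]
    (Q₁ Q₂ : Measure (Measure X)) : Measure (Measure X) :=
  (Q₁.prod Q₂).map (fun p => p.1 + p.2)

section Aux

variable {X : Type*} [MeasurableSpace X]

/-- Measurability of `y ↦ ∫⁻ μ, f μ ∂(K y)` for a measurable family of probability
measures `K`. -/
lemma measurable_lintegral_family {Y : Type*} [MeasurableSpace Y]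
    {K : Y → Measure (Measure X)} (hKm : Measurable K)
    (hKprob : ∀ y, IsProbabilityMeasure (K y))
    {f : Measure X → ℝ≥0∞} (hf : Measurable f) :
    Measurable fun y => ∫⁻ μ, f μ ∂(K y) := by
  let κ : ProbabilityTheory.Kernel Y (Measure X) := ⟨K, hKm⟩
  haveI : ProbabilityTheory.IsMarkovKernel κ := ⟨hKprob⟩
  exact Measurable.lintegral_kernel (κ := κ) hf

lemma sumLaw_apply (κ Q : Measure (Measure X)) [SFinite Q] {L : Set (Measure X)}
    (hL : MeasurableSet L) :
    sumLaw κ Q L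
      = ∫⁻ μ, ∫⁻ ν, L.indicator (fun _ => (1 : ENNReal)) (μ + ν) ∂Q ∂κ := by
  rw [sumLaw, Measure.map_apply measurable_add hL, Measure.prod_apply (measurable_add hL)]
  refine lintegral_congr fun μ => ?_
  rw [lintegral_indicator_const_comp (f := fun ν : Measure X => μ + ν)
    (measurable_const.add measurable_id) hL, one_mul]
  rfl

lemma measurable_sumLaw_left {Y : Type*} [MeasurableSpace Y]
    {K : Y → Measure (Measure X)} (hKm : Measurable K)
    (hKprob : ∀ y, IsProbabilityMeasure (K y))
    (Q : Measure (Measure X)) [SFinite Q] {L : Set (Measure X)} (hL : MeasurableSet L) :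
    Measurable fun y => sumLaw (K y) Q L := by
  simp_rw [fun y => sumLaw_apply (K y) Q hL]
  exact measurable_lintegral_family hKm hKprob
    (Measurable.lintegral_prod_right ((measurable_const.indicator hL).comp measurable_add))

/-- Extension of the Palm disintegration from indicators to arbitrary nonnegative
measurable functionals. -/
lemma palm_lintegral {Ω : Type*} [MeasurableSpace Ω] (P : Measure Ω)
    (Φ : Ω → Measure X) (hΦ : Measurable Φ)
    (M : Measure X) (K : X → Measure (Measure X)) (hKm : Measurable K)
    (hKprob : ∀ x, IsProbabilityMeasure (K x))
    {B : Set X} (hB : MeasurableSet B)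
    (hK : ∀ L : Set (Measure X), MeasurableSet L →
      ∫⁻ ω, Φ ω B * L.indicator (fun _ => (1 : ENNReal)) (Φ ω) ∂P
        = ∫⁻ x in B, K x L ∂M)
    {g : Measure X → ℝ≥0∞} (hg : Measurable g) :
    ∫⁻ ω, Φ ω B * g (Φ ω) ∂P = ∫⁻ x in B, ∫⁻ μ, g μ ∂(K x) ∂M := by
  have measB : Measurable fun ω => Φ ω B := (Measure.measurable_coe hB).comp hΦ
  refine Measurable.ennreal_induction
    (motive := fun g => ∫⁻ ω, Φ ω B * g (Φ ω) ∂P = ∫⁻ x in B, ∫⁻ μ, g μ ∂(K x) ∂M)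
    ?_ ?_ ?_ hg
  · intro c s hs
    have hind : ∀ μ : Measure X,
        Set.indicator s (fun _ => c) μ
          = c * Set.indicator s (fun _ => (1 : ENNReal)) μ := by
      intro μ; by_cases h : μ ∈ s <;> simp [h]
    have measI : Measurable fun ω => Set.indicator s (fun _ => (1 : ENNReal)) (Φ ω) :=
      (measurable_const.indicator hs).comp hΦ
    calc ∫⁻ ω, Φ ω B * Set.indicator s (fun _ => c) (Φ ω) ∂P
        = ∫⁻ ω, c * (Φ ω B * Set.indicator s (fun _ => (1 : ENNReal)) (Φ ω)) ∂P := by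
          refine lintegral_congr fun ω => ?_
          rw [hind]; ring
      _ = c * ∫⁻ ω, Φ ω B * Set.indicator s (fun _ => (1 : ENNReal)) (Φ ω) ∂P :=
          lintegral_const_mul c (measB.mul measI)
      _ = c * ∫⁻ x in B, K x s ∂M := by rw [hK s hs]
      _ = ∫⁻ x in B, c * K x s ∂M :=
          (lintegral_const_mul c ((Measure.measurable_coe hs).comp hKm)).symm
      _ = ∫⁻ x in B, ∫⁻ μ, Set.indicator s (fun _ => c) μ ∂(K x) ∂M := by
          refine lintegral_congr fun x => ?_
          rw [lintegral_indicator_const hs]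
  · intro f g hd hf hg ihf ihg
    have m1 : Measurable fun ω => Φ ω B * f (Φ ω) := measB.mul (hf.comp hΦ)
    have mE : Measurable fun x => ∫⁻ μ, f μ ∂(K x) :=
      measurable_lintegral_family hKm hKprob hf
    calc ∫⁻ ω, Φ ω B * (f + g) (Φ ω) ∂P
        = ∫⁻ ω, (Φ ω B * f (Φ ω) + Φ ω B * g (Φ ω)) ∂P := by
          simp only [Pi.add_apply, mul_add]
      _ = (∫⁻ ω, Φ ω B * f (Φ ω) ∂P) + ∫⁻ ω, Φ ω B * g (Φ ω) ∂P :=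
          lintegral_add_left m1 _
      _ = (∫⁻ x in B, ∫⁻ μ, f μ ∂(K x) ∂M) + ∫⁻ x in B, ∫⁻ μ, g μ ∂(K x) ∂M := by
          rw [ihf, ihg]
      _ = ∫⁻ x in B, (∫⁻ μ, f μ ∂(K x) + ∫⁻ μ, g μ ∂(K x)) ∂M :=
          (lintegral_add_left mE _).symm
      _ = ∫⁻ x in B, ∫⁻ μ, (f + g) μ ∂(K x) ∂M := by
          refine lintegral_congr fun x => ?_
          exact (lintegral_add_left hf _).symm
  · intro f hf hmono ih
    have measFn : ∀ n, Measurable fun ω => Φ ω B * f n (Φ ω) :=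
      fun n => measB.mul ((hf n).comp hΦ)
    have measE : ∀ n, Measurable fun x => ∫⁻ μ, f n μ ∂(K x) :=
      fun n => measurable_lintegral_family hKm hKprob (hf n)
    calc ∫⁻ ω, Φ ω B * (fun μ => ⨆ n, f n μ) (Φ ω) ∂P
        = ∫⁻ ω, ⨆ n, Φ ω B * f n (Φ ω) ∂P := by
          refine lintegral_congr fun ω => ?_
          simp only [ENNReal.mul_iSup]
      _ = ⨆ n, ∫⁻ ω, Φ ω B * f n (Φ ω) ∂P :=
          lintegral_iSup measFn
            (fun i j hij ω => mul_le_mul_right (hmono hij _) _)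
      _ = ⨆ n, ∫⁻ x in B, ∫⁻ μ, f n μ ∂(K x) ∂M := by
          exact iSup_congr fun n => ih n
      _ = ∫⁻ x in B, ⨆ n, ∫⁻ μ, f n μ ∂(K x) ∂M :=
          (lintegral_iSup measE
            (fun i j hij x => lintegral_mono fun μ => hmono hij μ)).symm
      _ = ∫⁻ x in B, ∫⁻ μ, (fun μ => ⨆ n, f n μ) μ ∂(K x) ∂M := by
          refine lintegral_congr fun x => ?_
          exact (lintegral_iSup (fun n => hf n) (fun i j hij μ => hmono hij μ)).symm

/-- Key computation for a single term: Palm disintegration for `Φ` in the presence of an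
independent random measure `R`. -/
lemma palm_add_indep {Ω : Type*} [MeasurableSpace Ω] (P : Measure Ω)
    [IsProbabilityMeasure P]
    (Φ : Ω → Measure X) (hΦ : Measurable Φ)
    (R : Ω → Measure X) (hR : Measurable R)
    (hindep : ProbabilityTheory.IndepFun Φ R P)
    (M : Measure X) (K : X → Measure (Measure X)) (hKm : Measurable K)
    (hKprob : ∀ x, IsProbabilityMeasure (K x))
    {B : Set X} (hB : MeasurableSet B)
    (hK : ∀ L : Set (Measure X), MeasurableSet L →
      ∫⁻ ω, Φ ω B * L.indicator (fun _ => (1 : ENNReal)) (Φ ω) ∂P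
        = ∫⁻ x in B, K x L ∂M)
    {L : Set (Measure X)} (hL : MeasurableSet L) :
    ∫⁻ ω, Φ ω B * L.indicator (fun _ => (1 : ENNReal)) (Φ ω + R ω) ∂P
      = ∫⁻ x in B, sumLaw (K x) (P.map R) L ∂M := by
  set Q : Measure (Measure X) := P.map R with hQ
  haveI : IsProbabilityMeasure Q := Measure.isProbabilityMeasure_map hR.aemeasurable
  set g : Measure X → ℝ≥0∞ :=
    fun μ => ∫⁻ ν, L.indicator (fun _ => (1 : ENNReal)) (μ + ν) ∂Q with hgdef
  have hg : Measurable g :=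
    Measurable.lintegral_prod_right ((measurable_const.indicator hL).comp measurable_add)
  have hF : Measurable fun p : Measure X × Measure X =>
      p.1 B * L.indicator (fun _ => (1 : ENNReal)) (p.1 + p.2) :=
    ((Measure.measurable_coe hB).comp measurable_fst).mul
      ((measurable_const.indicator hL).comp measurable_add)
  have hjoint : P.map (fun ω => (Φ ω, R ω)) = (P.map Φ).prod Q :=
    (ProbabilityTheory.indepFun_iff_map_prod_eq_prod_map_map hΦ.aemeasurable
      hR.aemeasurable).mp hindep
  calc ∫⁻ ω, Φ ω B * L.indicator (fun _ => (1 : ENNReal)) (Φ ω + R ω) ∂P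
      = ∫⁻ p, p.1 B * L.indicator (fun _ => (1 : ENNReal)) (p.1 + p.2)
          ∂(P.map (fun ω => (Φ ω, R ω))) :=
        (lintegral_map hF (hΦ.prodMk hR)).symm
    _ = ∫⁻ p, p.1 B * L.indicator (fun _ => (1 : ENNReal)) (p.1 + p.2)
          ∂((P.map Φ).prod Q) := by rw [hjoint]
    _ = ∫⁻ μ, ∫⁻ ν, μ B * L.indicator (fun _ => (1 : ENNReal)) (μ + ν) ∂Q ∂(P.map Φ) :=
        lintegral_prod _ hF.aemeasurable
    _ = ∫⁻ μ, μ B * g μ ∂(P.map Φ) := by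
        refine lintegral_congr fun μ => ?_
        rw [hgdef]
        exact lintegral_const_mul _
          ((measurable_const.indicator hL).comp (measurable_const.add measurable_id))
    _ = ∫⁻ ω, Φ ω B * g (Φ ω) ∂P :=
        lintegral_map (((Measure.measurable_coe hB).comp measurable_id).mul hg) hΦ
    _ = ∫⁻ x in B, ∫⁻ μ, g μ ∂(K x) ∂M :=
        palm_lintegral P Φ hΦ M K hKm hKprob hB hK hg
    _ = ∫⁻ x in B, sumLaw (K x) Q L ∂M := by
        refine lintegral_congr fun x => ?_
        rw [sumLaw_apply (K x) Q hL]

lemma sigmaFinite_finset_sum {ι : Type*} (s : Finset ι) (μ : ι → Measure X)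
    (h : ∀ i ∈ s, SigmaFinite (μ i)) : SigmaFinite (∑ i ∈ s, μ i) := by
  classical
  induction s using Finset.induction_on with
  | empty => simpa using (inferInstance : SigmaFinite (0 : Measure X))
  | @insert a s ha ih =>
    rw [Finset.sum_insert ha]
    haveI := h a (Finset.mem_insert_self _ _)
    haveI := ih fun i hi => h i (Finset.mem_insert_of_mem hi)
    infer_instance

end Aux

/-- Let `Φ₁, …, Φ_d` be mutually independent random measures with
σ-finite mean measures `M₁, …, M_d` and Palm kernels `K₁, …, K_d`.  Then the kernel
`x ↦ Σᵢ (dMᵢ/dM)(x) • (Kᵢ x ⊕ law(Σ_{q≠i} Φ_q))`, with `M = Σᵢ Mᵢ`, is a Palm kernel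
for `Φ = Σᵢ Φᵢ`. -/
theorem palm_of_superposition_multiple
    {Ω X : Type*} [MeasurableSpace Ω] [MeasurableSpace X]
    (P : Measure Ω) [IsProbabilityMeasure P]
    (d : ℕ) (Φ : Fin d → Ω → Measure X) (hΦ : ∀ i, Measurable (Φ i))
    (hIndep : ProbabilityTheory.iIndepFun Φ P)
    (M : Fin d → Measure X) (hMsf : ∀ i, SigmaFinite (M i))
    (hM : ∀ i, ∀ B : Set X, MeasurableSet B → M i B = ∫⁻ ω, Φ i ω B ∂P)
    (K : Fin d → X → Measure (Measure X))
    (hKmeas : ∀ i, Measurable (K i))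
    (hKprob : ∀ i x, IsProbabilityMeasure (K i x))
    (hK : ∀ i, ∀ B : Set X, MeasurableSet B → ∀ L : Set (Measure X), MeasurableSet L →
      ∫⁻ ω, Φ i ω B * L.indicator (fun _ => (1 : ENNReal)) (Φ i ω) ∂P
        = ∫⁻ x in B, K i x L ∂(M i)) :
    ∀ B : Set X, MeasurableSet B → ∀ L : Set (Measure X), MeasurableSet L →
      ∫⁻ ω, (∑ i, Φ i ω) B * L.indicator (fun _ => (1 : ENNReal)) (∑ i, Φ i ω) ∂P
        = ∫⁻ x in B,
            ∑ i, (M i).rnDeriv (∑ q, M q) x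
              * sumLaw (K i x) (P.map (fun ω => ∑ q ∈ Finset.univ.erase i, Φ q ω)) L
          ∂(∑ q, M q) := by
  classical
  intro B hB L hL
  haveI hMsumSF : SigmaFinite (∑ q, M q) :=
    sigmaFinite_finset_sum Finset.univ M fun i _ => hMsf i
  haveI : ∀ i, SigmaFinite (M i) := hMsf
  -- notation for the "rest" random measures and their laws
  set R : Fin d → Ω → Measure X :=
    fun i ω => ∑ q ∈ Finset.univ.erase i, Φ q ω with hRdef
  have hRmeas : ∀ i, Measurable (R i) :=
    fun i => Finset.measurable_sum _ fun q _ => hΦ q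
  have hsum_meas : Measurable fun ω => ∑ i, Φ i ω :=
    Finset.measurable_sum _ fun i _ => hΦ i
  have hindep : ∀ i, ProbabilityTheory.IndepFun (Φ i) (R i) P := by
    intro i
    have h := (hIndep.indepFun_finsetSum_of_notMem hΦ
      (Finset.notMem_erase i Finset.univ)).symm
    have : (∑ j ∈ Finset.univ.erase i, Φ j) = R i := by
      funext ω; simp [hRdef, Finset.sum_apply]
    rwa [this] at h
  -- the common value of each term
  have hterm : ∀ i : Fin d,
      ∫⁻ ω, Φ i ω B * L.indicator (fun _ => (1 : ENNReal)) (Φ i ω + R i ω) ∂P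
        = ∫⁻ x in B, sumLaw (K i x) (P.map (R i)) L ∂(M i) :=
    fun i => palm_add_indep P (Φ i) (hΦ i) (R i) (hRmeas i) (hindep i)
      (M i) (K i) (hKmeas i) (hKprob i) hB (fun L' hL' => hK i B hB L' hL') hL
  -- measurability of the sumLaw terms
  haveI : ∀ i, IsProbabilityMeasure (P.map (R i)) :=
    fun i => Measure.isProbabilityMeasure_map (hRmeas i).aemeasurable
  have hfmeas : ∀ i : Fin d, Measurable fun x => sumLaw (K i x) (P.map (R i)) L :=
    fun i => measurable_sumLaw_left (hKmeas i) (hKprob i) (P.map (R i)) hL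
  -- absolute continuity
  have hac : ∀ i : Fin d, M i ≪ (∑ q, M q) := by
    intro i
    refine Measure.AbsolutelyContinuous.mk fun s hms hs0 => ?_
    rw [Measure.finset_sum_apply] at hs0
    exact (Finset.sum_eq_zero_iff.mp hs0) i (Finset.mem_univ i)
  -- compute the left-hand side
  have hsplit : ∀ ω, ∀ i : Fin d, (∑ q, Φ q ω) = Φ i ω + R i ω := by
    intro ω i
    rw [hRdef]
    exact (Finset.add_sum_erase Finset.univ (fun q => Φ q ω) (Finset.mem_univ i)).symm
  calc ∫⁻ ω, (∑ i, Φ i ω) B * L.indicator (fun _ => (1 : ENNReal)) (∑ i, Φ i ω) ∂P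
      = ∫⁻ ω, ∑ i, Φ i ω B * L.indicator (fun _ => (1 : ENNReal)) (Φ i ω + R i ω) ∂P := by
        refine lintegral_congr fun ω => ?_
        rw [Measure.finset_sum_apply, Finset.sum_mul]
        exact Finset.sum_congr rfl fun i _ => by rw [← hsplit ω i]
    _ = ∑ i, ∫⁻ ω, Φ i ω B * L.indicator (fun _ => (1 : ENNReal)) (Φ i ω + R i ω) ∂P := by
        refine lintegral_finset_sum _ fun i _ => ?_
        refine ((Measure.measurable_coe hB).comp (hΦ i)).mul ?_
        exact (measurable_const.indicator hL).comp (((hΦ i).add (hRmeas i)))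
    _ = ∑ i, ∫⁻ x in B, sumLaw (K i x) (P.map (R i)) L ∂(M i) :=
        Finset.sum_congr rfl fun i _ => hterm i
    _ = ∑ i, ∫⁻ x in B, (M i).rnDeriv (∑ q, M q) x
          * sumLaw (K i x) (P.map (R i)) L ∂(∑ q, M q) := by
        refine Finset.sum_congr rfl fun i _ => ?_
        exact (setLIntegral_rnDeriv_mul (hac i) (hfmeas i).aemeasurable hB).symm
    _ = ∫⁻ x in B, ∑ i, (M i).rnDeriv (∑ q, M q) x
          * sumLaw (K i x) (P.map (R i)) L ∂(∑ q, M q) := by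
        refine (lintegral_finset_sum _ fun i _ => ?_).symm
        exact (Measure.measurable_rnDeriv _ _).mul (hfmeas i)
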